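/- Let w_1, …, w_k (k ≥ 3) be an integral sorted edge family, with w_i = n_i·v_i where n_i is a positive integer and v_i ∈ ℤ² has coprime coordinates. Write s_0 = 0 and s_j = w_1 + ⋯ + w_j. Then the set of integer points lying on the topological frontier of the polygon of the family is exactly { s_{j−1} + m·v_j : 1 ≤ j ≤ k, 0 ≤ m ≤ n_j }. -/

import Mathlib

/-- The argument in `[0, 2π)` of a vector of `ℝ²` (junk value for `0`). -/
noncomputable def argIn (u : ℝ × ℝ) : ℝ :=
  if 0 ≤ Complex.arg ⟨u.1, u.2⟩ then Complex.arg ⟨u.1, u.2⟩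
  else Complex.arg ⟨u.1, u.2⟩ + 2 * Real.pi

/-- A sorted edge family: a finite sequence of nonzero vectors of `ℝ²` summing to `0`,
whose arguments in `[0, 2π)` are strictly increasing. -/
def IsSortedEdgeFamily {k : ℕ} (w : Fin k → ℝ × ℝ) : Prop :=
  (∀ i, w i ≠ 0) ∧ (∑ i, w i = 0) ∧
  ∀ i j : Fin k, i < j → argIn (w i) < argIn (w j)

/-- The partial sums `s_j = w_1 + ⋯ + w_j` of an edge family. -/
noncomputable def partialSum {k : ℕ} (w : Fin k → ℝ × ℝ) (j : Fin k) : ℝ × ℝ :=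
  ∑ i ∈ Finset.Iic j, w i

open Real


/-- 2D cross product. -/
def crossP (a b : ℝ × ℝ) : ℝ := a.1 * b.2 - a.2 * b.1

lemma argIn_nonneg (u : ℝ × ℝ) : 0 ≤ argIn u := by
  unfold argIn
  split_ifs with h
  · exact h
  · nlinarith [Complex.neg_pi_lt_arg (⟨u.1, u.2⟩ : ℂ), Real.pi_pos]

lemma argIn_lt_two_pi (u : ℝ × ℝ) : argIn u < 2 * Real.pi := by
  unfold argIn
  split_ifs with h
  · nlinarith [Complex.arg_le_pi (⟨u.1, u.2⟩ : ℂ), Real.pi_pos]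
  · push_neg at h; nlinarith [h]

lemma cos_argIn (u : ℝ × ℝ) : Real.cos (argIn u) = Real.cos (Complex.arg ⟨u.1, u.2⟩) := by
  unfold argIn; split_ifs with h
  · rfl
  · rw [Real.cos_add_two_pi]

lemma sin_argIn (u : ℝ × ℝ) : Real.sin (argIn u) = Real.sin (Complex.arg ⟨u.1, u.2⟩) := by
  unfold argIn; split_ifs with h
  · rfl
  · rw [Real.sin_add_two_pi]

lemma complex_ne_zero {u : ℝ × ℝ} (hu : u ≠ 0) : (⟨u.1, u.2⟩ : ℂ) ≠ 0 := by
  intro h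
  apply hu
  have h1 : (⟨u.1, u.2⟩ : ℂ).re = 0 := by rw [h]; simp
  have h2 : (⟨u.1, u.2⟩ : ℂ).im = 0 := by rw [h]; simp
  exact Prod.ext h1 h2

lemma fst_eq (u : ℝ × ℝ) (hu : u ≠ 0) :
    u.1 = ‖(⟨u.1, u.2⟩ : ℂ)‖ * Real.cos (argIn u) := by
  rw [cos_argIn, Complex.cos_arg (complex_ne_zero hu)]
  have : ‖(⟨u.1, u.2⟩ : ℂ)‖ ≠ 0 := by
    simpa using complex_ne_zero hu
  field_simp

lemma snd_eq (u : ℝ × ℝ) (hu : u ≠ 0) :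
    u.2 = ‖(⟨u.1, u.2⟩ : ℂ)‖ * Real.sin (argIn u) := by
  rw [sin_argIn, Complex.sin_arg]
  have : ‖(⟨u.1, u.2⟩ : ℂ)‖ ≠ 0 := by simpa using complex_ne_zero hu
  field_simp

/-- cross product in terms of angles -/
lemma crossP_eq (a b : ℝ × ℝ) (ha : a ≠ 0) (hb : b ≠ 0) :
    ∃ R : ℝ, 0 < R ∧ crossP a b = R * Real.sin (argIn b - argIn a) := by
  refine ⟨‖(⟨a.1, a.2⟩ : ℂ)‖ * ‖(⟨b.1, b.2⟩ : ℂ)‖, ?_, ?_⟩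
  · have h1 : (0:ℝ) < ‖(⟨a.1, a.2⟩ : ℂ)‖ := by
      exact norm_pos_iff.mpr (complex_ne_zero ha)
    have h2 : (0:ℝ) < ‖(⟨b.1, b.2⟩ : ℂ)‖ := by
      exact norm_pos_iff.mpr (complex_ne_zero hb)
    positivity
  · set ra := ‖(⟨a.1, a.2⟩ : ℂ)‖ with hra
    set rb := ‖(⟨b.1, b.2⟩ : ℂ)‖ with hrb
    have e1 := fst_eq a ha
    have e2 := snd_eq a ha
    have e3 := fst_eq b hb
    have e4 := snd_eq b hb
    rw [← hra] at e1 e2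
    rw [← hrb] at e3 e4
    rw [Real.sin_sub, crossP, e1, e2, e3, e4]
    ring

open Finset

-- sign helpers
lemma sin_neg_imp {x : ℝ} (h0 : 0 ≤ x) (h2 : x < 2*π) (hs : Real.sin x < 0) : π < x := by
  by_contra h
  push_neg at h
  exact absurd (Real.sin_nonneg_of_nonneg_of_le_pi h0 h) (by linarith)

lemma sin_nonpos_of_pi_le {x : ℝ} (h1 : π ≤ x) (h2 : x ≤ 2*π) : Real.sin x ≤ 0 := by
  have : Real.sin (x - π) ≥ 0 := Real.sin_nonneg_of_nonneg_of_le_pi (by linarith) (by linarith)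
  have hx : Real.sin (x - π) = - Real.sin x := by
    rw [Real.sin_sub, Real.sin_pi, Real.cos_pi]; ring
  linarith [hx ▸ this]

lemma sin_pos_imp {x : ℝ} (h0 : -π < x) (h2 : x < 2*π) (hs : 0 < Real.sin x) :
    0 < x ∧ x < π := by
  constructor
  · by_contra h
    push_neg at h
    have : Real.sin x ≤ 0 := by
      have : Real.sin (-x) ≥ 0 := Real.sin_nonneg_of_nonneg_of_le_pi (by linarith) (by linarith)
      rw [Real.sin_neg] at this; linarith
    linarith
  · by_contra h
    push_neg at h
    exact absurd (sin_nonpos_of_pi_le h (by linarith)) (by linarith)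

/-- pattern -,+,-,+ of sin along a weakly increasing sequence of span < 2π is impossible -/
lemma four_pattern {x1 x2 x3 x4 : ℝ} (h12 : x1 ≤ x2) (h23 : x2 ≤ x3) (h34 : x3 ≤ x4)
    (hspan : x4 < x1 + 2*π)
    (s1 : Real.sin x1 < 0) (s2 : 0 < Real.sin x2) (s3 : Real.sin x3 < 0)
    (s4 : 0 < Real.sin x4) : False := by
  have hpi := Real.pi_pos
  -- normalize x1 into [0, 2π)
  obtain ⟨n, hn0, hn2⟩ : ∃ n : ℤ, 0 ≤ x1 - n * (2*π) ∧ x1 - n * (2*π) < 2*π := by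
    exact ⟨⌊x1 / (2*π)⌋, Int.sub_floor_div_mul_nonneg x1 (by linarith),
      Int.sub_floor_div_mul_lt x1 (by linarith)⟩
  set y1 := x1 - n * (2*π) with hy1
  set y2 := x2 - n * (2*π) with hy2
  set y3 := x3 - n * (2*π) with hy3
  set y4 := x4 - n * (2*π) with hy4
  have e1 : Real.sin y1 = Real.sin x1 := by rw [hy1, Real.sin_sub_int_mul_two_pi]
  have e2 : Real.sin y2 = Real.sin x2 := by rw [hy2, Real.sin_sub_int_mul_two_pi]
  have e3 : Real.sin y3 = Real.sin x3 := by rw [hy3, Real.sin_sub_int_mul_two_pi]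
  have e4 : Real.sin y4 = Real.sin x4 := by rw [hy4, Real.sin_sub_int_mul_two_pi]
  have b1 : π < y1 := sin_neg_imp hn0 hn2 (by rw [e1]; exact s1)
  -- y2 ∈ (2π, 3π)
  have b2 : 2*π < y2 ∧ y2 < 3*π := by
    have h := sin_pos_imp (x := y2 - 2*π) (by simp only [hy2]; linarith) (by simp only [hy2]; linarith) ?_
    · constructor <;> linarith [h.1, h.2]
    · rw [show y2 - 2*π = y2 - (1:ℤ) * (2*π) by push_cast; ring, Real.sin_sub_int_mul_two_pi, e2]
      exact s2
  have b3 : 3*π < y3 := by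
    have h := sin_neg_imp (x := y3 - 2*π) (by linarith [b2.1]) (by simp only [hy3]; linarith) ?_
    · linarith
    · rw [show y3 - 2*π = y3 - (1:ℤ) * (2*π) by push_cast; ring, Real.sin_sub_int_mul_two_pi, e3]
      exact s3
  have b4 : Real.sin y4 ≤ 0 := by
    have : Real.sin (y4 - 2*π) ≤ 0 :=
      sin_nonpos_of_pi_le (by linarith) (by simp only [hy4]; linarith)
    rw [show y4 - 2*π = y4 - (1:ℤ) * (2*π) by push_cast; ring, Real.sin_sub_int_mul_two_pi] at this
    exact this
  rw [e4] at b4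
  linarith

/-- prefix sums are nonneg when total is 0 and negativity of terms is upward closed -/
lemma prefix_nonneg {K : ℕ} (c : Fin K → ℝ) (h0 : ∑ t, c t = 0)
    (hP : ∀ t t' : Fin K, t ≤ t' → c t < 0 → c t' ≤ 0) (T : Fin K) :
    0 ≤ ∑ t ∈ Finset.Iic T, c t := by
  by_contra h
  push_neg at h
  obtain ⟨t, ht, htneg⟩ : ∃ t ∈ Finset.Iic T, c t < 0 := by
    by_contra h2
    push_neg at h2
    exact absurd (Finset.sum_nonneg fun t ht => h2 t ht) (by linarith)
  have hcompl : ∑ t ∈ (Finset.Iic T)ᶜ, c t ≤ 0 := by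
    refine Finset.sum_nonpos fun t' ht' => ?_
    rw [Finset.mem_compl, Finset.mem_Iic] at ht'
    exact hP t t' (le_trans (Finset.mem_Iic.mp ht) (le_of_not_ge ht')) htneg
  have := Finset.sum_add_sum_compl (Finset.Iic T) c
  rw [h0] at this
  linarith

-- Fin val arithmetic
lemma fin_add_val {k : ℕ} (a b : Fin k) :
    (a + b).val = if a.val + b.val < k then a.val + b.val else a.val + b.val - k := by
  rw [Fin.add_def]
  simp only []
  split_ifs with h
  · exact Nat.mod_eq_of_lt h
  · push_neg at h
    rw [Nat.mod_eq_sub_mod h, Nat.mod_eq_of_lt (by omega)]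

lemma fin_sub_val {k : ℕ} (a b : Fin k) :
    (a - b).val = if b.val ≤ a.val then a.val - b.val else a.val + k - b.val := by
  rw [Fin.sub_def]
  simp only []
  have hb := b.isLt
  have ha := a.isLt
  split_ifs with h
  · rw [Nat.mod_eq_sub_mod (by omega), Nat.mod_eq_of_lt (by omega)]
    omega
  · rw [Nat.mod_eq_of_lt (by omega)]
    omega


section cyc
variable {k : ℕ} [NeZero k] (w : Fin k → ℝ × ℝ)

lemma crossP_sum (a : ℝ × ℝ) {ι : Type*} (S : Finset ι) (f : ι → ℝ × ℝ) :
    crossP a (∑ x ∈ S, f x) = ∑ x ∈ S, crossP a (f x) := by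
  unfold crossP
  rw [Prod.fst_sum, Prod.snd_sum, Finset.mul_sum, Finset.mul_sum, ← Finset.sum_sub_distrib]

lemma sum_shift (j : Fin k) : ∑ t, w (j + t) = ∑ t, w t :=
  Fintype.sum_equiv (Equiv.addLeft j) _ _ (fun t => rfl)

/-- partial sum from p_j around the cycle -/
lemma cyc_sum (hsum : ∑ i, w i = 0) (j i : Fin k) :
    ∑ t ∈ Finset.Iic (i - j), w (j + t) =
      partialSum w i - ∑ t ∈ Finset.Iio j, w t := by
  have step1 : ∑ t ∈ Finset.Iic (i - j), w (j + t) =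
      ∑ x ∈ Finset.univ.filter (fun x => x - j ≤ i - j), w x := by
    refine Finset.sum_nbij' (fun t => j + t) (fun x => x - j) ?_ ?_ ?_ ?_ ?_
    · intro t ht
      simp only [Finset.mem_filter, Finset.mem_univ, true_and, add_sub_cancel_left]
      exact Finset.mem_Iic.mp ht
    · intro x hx
      simp only [Finset.mem_filter, Finset.mem_univ, true_and] at hx
      exact Finset.mem_Iic.mpr hx
    · intro t _; show j + t - j = t; exact add_sub_cancel_left j t
    · intro x _; show j + (x - j) = x; rw [add_comm, sub_add_cancel]
    · intro t _; rfl
  rw [step1]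
  have hi := i.isLt; have hj := j.isLt
  rcases le_or_gt j i with h | h
  · have hS : Finset.univ.filter (fun x => x - j ≤ i - j) = Finset.Icc j i := by
      ext x
      have hx := x.isLt
      rw [Fin.le_def] at h
      simp only [Finset.mem_filter, Finset.mem_univ, true_and, Finset.mem_Icc, Fin.le_def,
        fin_sub_val]
      split_ifs <;> omega
    rw [hS]
    have hunion : Finset.Iio j ∪ Finset.Icc j i = Finset.Iic i := by
      ext x
      simp only [Finset.mem_union, Finset.mem_Iio, Finset.mem_Icc, Finset.mem_Iic, Fin.le_def,
        Fin.lt_def]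
      rw [Fin.le_def] at h
      omega
    have hdisj : Disjoint (Finset.Iio j) (Finset.Icc j i) := by
      rw [Finset.disjoint_left]
      intro x hx hx2
      simp only [Finset.mem_Iio, Fin.lt_def] at hx
      simp only [Finset.mem_Icc, Fin.le_def] at hx2
      omega
    have := Finset.sum_union hdisj (f := w)
    rw [hunion] at this
    rw [partialSum, this]
    abel
  · have hS : Finset.univ.filter (fun x => x - j ≤ i - j) = Finset.univ \ Finset.Ioo i j := by
      ext x
      have hx := x.isLt
      rw [Fin.lt_def] at h
      simp only [Finset.mem_filter, Finset.mem_univ, true_and, Finset.mem_sdiff, Finset.mem_Ioo,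
        Fin.le_def, Fin.lt_def, fin_sub_val]
      split_ifs <;> omega
    rw [hS, Finset.sum_sdiff_eq_sub (Finset.subset_univ _), hsum]
    have hunion : Finset.Iic i ∪ Finset.Ioo i j = Finset.Iio j := by
      ext x
      simp only [Finset.mem_union, Finset.mem_Iic, Finset.mem_Ioo, Finset.mem_Iio, Fin.le_def,
        Fin.lt_def]
      rw [Fin.lt_def] at h
      omega
    have hdisj : Disjoint (Finset.Iic i) (Finset.Ioo i j) := by
      rw [Finset.disjoint_left]
      intro x hx hx2
      simp only [Finset.mem_Iic, Fin.le_def] at hx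
      simp only [Finset.mem_Ioo, Fin.lt_def] at hx2
      omega
    have := Finset.sum_union hdisj (f := w)
    rw [hunion] at this
    rw [partialSum, this]
    abel

/-- p_j + w_j = s_j -/
lemma pic (j : Fin k) : (∑ t ∈ Finset.Iio j, w t) + w j = partialSum w j := by
  rw [partialSum, ← Finset.Iio_insert, Finset.sum_insert (by simp)]
  abel

/-- p_{i+1} = s_i (cyclically) -/
lemma pps (hk2 : 2 ≤ k) (hsum : ∑ i, w i = 0) (i : Fin k) :
    ∑ t ∈ Finset.Iio (i + 1), w t = partialSum w i := by
  have hi := i.isLt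
  have h1' : 1 % k = 1 := Nat.mod_eq_of_lt (by omega)
  rcases lt_or_ge (i.val + 1) k with h | h
  · have : Finset.Iio (i + 1) = Finset.Iic i := by
      ext x
      have h1 : (1 : Fin k).val = 1 % k := rfl
      simp only [Finset.mem_Iio, Finset.mem_Iic, Fin.lt_def, Fin.le_def, fin_add_val, h1, h1']
      split_ifs <;> omega
    rw [this, partialSum]
  · -- wrap: i = k-1, i+1 = 0
    have hiv : i.val = k - 1 := by omega
    have h0 : i + 1 = 0 := by
      apply Fin.ext
      have h1 : (1 : Fin k).val = 1 % k := rfl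
      have h2 : (0 : Fin k).val = 0 := rfl
      simp only [fin_add_val, h1, h1', h2]
      split_ifs <;> omega
    rw [h0]
    have : Finset.Iio (0 : Fin k) = ∅ := by
      ext x; simp [Fin.lt_def]
    rw [this, Finset.sum_empty]
    have : Finset.Iic i = Finset.univ := by
      ext x
      simp only [Finset.mem_Iic, Finset.mem_univ, iff_true, Fin.le_def]
      have := x.isLt; omega
    rw [partialSum, this, hsum]
end cyc
section geom
variable {k : ℕ} [NeZero k] {w : Fin k → ℝ × ℝ}

/-- wrap characterization -/
lemma wrap_iff (j t : Fin k) : (j + t < j) ↔ k ≤ j.val + t.val := by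
  have := j.isLt; have := t.isLt
  rw [Fin.lt_def, fin_add_val]
  split_ifs <;> omega

/-- the cyclic lift of the angles starting at j -/
noncomputable def lift (w : Fin k → ℝ × ℝ) (j t : Fin k) : ℝ :=
  argIn (w (j + t)) + (if j + t < j then 2 * Real.pi else 0)

variable (hmono : ∀ i j : Fin k, i < j → argIn (w i) < argIn (w j))
include hmono

lemma argIn_mono : ∀ i j : Fin k, i ≤ j → argIn (w i) ≤ argIn (w j) := by
  intro i j hij
  rcases eq_or_lt_of_le hij with h | h
  · rw [h]
  · exact le_of_lt (hmono i j h)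

lemma lift_lb (j t : Fin k) : argIn (w j) ≤ lift w j t := by
  unfold lift
  split_ifs with h
  · have := argIn_lt_two_pi (w j)
    have := argIn_nonneg (w (j + t))
    linarith
  · push_neg at h
    simpa using argIn_mono hmono j (j + t) h

lemma lift_ub (j t : Fin k) : lift w j t < argIn (w j) + 2 * Real.pi := by
  unfold lift
  split_ifs with h
  · have : argIn (w (j + t)) < argIn (w j) := hmono _ _ h
    linarith
  · have := argIn_lt_two_pi (w (j + t))
    have := argIn_nonneg (w j)
    linarith

lemma lift_mono (j : Fin k) {t t' : Fin k} (h : t ≤ t') : lift w j t ≤ lift w j t' := by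
  unfold lift
  have hj := j.isLt; have ht := t.isLt; have ht' := t'.isLt
  rw [Fin.le_def] at h
  by_cases h1 : j + t < j <;> by_cases h2 : j + t' < j
  · simp only [h1, h2, if_pos]
    have : j + t ≤ j + t' := by
      rw [wrap_iff] at h1 h2
      rw [Fin.le_def, fin_add_val, fin_add_val]
      split_ifs <;> omega
    linarith [argIn_mono hmono _ _ this]
  · exfalso
    rw [wrap_iff] at h1
    rw [wrap_iff] at h2
    omega
  · simp only [h1, h2, if_pos, if_neg, not_false_iff]
    have := argIn_lt_two_pi (w (j + t))
    have := argIn_nonneg (w (j + t'))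
    linarith
  · simp only [h1, h2, if_neg, not_false_iff]
    have : j + t ≤ j + t' := by
      rw [wrap_iff] at h1 h2
      rw [Fin.le_def, fin_add_val, fin_add_val]
      split_ifs <;> omega
    simpa using argIn_mono hmono _ _ this

omit hmono in
lemma lift_sin (j t : Fin k) (α : ℝ) :
    Real.sin (lift w j t - α) = Real.sin (argIn (w (j + t)) - α) := by
  unfold lift
  split_ifs with h
  · rw [show argIn (w (j + t)) + 2 * Real.pi - α = argIn (w (j + t)) - α + 2 * Real.pi by ring,
      Real.sin_add_two_pi]
  · ring_nf

variable (hw0 : ∀ i, w i ≠ 0) (hsum : ∑ i, w i = 0)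
include hw0 hsum

/-- The supporting-line lemma: every partial sum is on the nonneg side of every edge. -/
lemma lemS (j i : Fin k) :
    0 ≤ crossP (w j) (partialSum w i - ∑ t ∈ Finset.Iio j, w t) := by
  set c : Fin k → ℝ := fun t => crossP (w j) (w (j + t)) with hc
  have htot : ∑ t, c t = 0 := by
    rw [hc, ← crossP_sum, sum_shift w j, hsum]
    simp [crossP]
  have hP : ∀ t t' : Fin k, t ≤ t' → c t < 0 → c t' ≤ 0 := by
    intro t t' htt' hneg
    obtain ⟨R, hR, hRe⟩ := crossP_eq (w j) (w (j + t)) (hw0 j) (hw0 _)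
    obtain ⟨R', hR', hRe'⟩ := crossP_eq (w j) (w (j + t')) (hw0 j) (hw0 _)
    rw [hc] at hneg ⊢
    simp only at hneg ⊢
    rw [hRe] at hneg
    rw [hRe']
    have hs : Real.sin (argIn (w (j + t)) - argIn (w j)) < 0 := by
      by_contra hcon
      push_neg at hcon
      nlinarith
    rw [← lift_sin (w := w) j t (argIn (w j))] at hs
    have hb1 := lift_lb hmono j t
    have hb2 := lift_ub hmono j t
    have hgt : Real.pi < lift w j t - argIn (w j) :=
      sin_neg_imp (by linarith) (by linarith) hs
    have hb1' := lift_lb hmono j t'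
    have hb2' := lift_ub hmono j t'
    have hmle := lift_mono hmono j htt'
    have : Real.sin (lift w j t' - argIn (w j)) ≤ 0 :=
      sin_nonpos_of_pi_le (by linarith) (by linarith)
    rw [lift_sin (w := w) j t' (argIn (w j))] at this
    nlinarith
  have hpre := prefix_nonneg c htot hP (i - j)
  rw [hc] at hpre
  simp only at hpre
  rw [← crossP_sum, cyc_sum w hsum j i] at hpre
  exact hpre

/-- no two cyclically adjacent edge vectors are antiparallel (both parallel to some u≠0) -/
lemma anti (hk : 3 ≤ k) (u : ℝ × ℝ) (hu : u ≠ 0) (b : Fin k)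
    (h1 : crossP u (w b) = 0) (h2 : crossP u (w (b + 1)) = 0) : False := by
  have hpar : crossP (w b) (w (b + 1)) = 0 := by
    have e1 : u.1 * crossP (w b) (w (b + 1)) = 0 := by
      unfold crossP at h1 h2 ⊢
      linear_combination (w b).1 * h2 - (w (b + 1)).1 * h1
    have e2 : u.2 * crossP (w b) (w (b + 1)) = 0 := by
      unfold crossP at h1 h2 ⊢
      linear_combination (w b).2 * h2 - (w (b + 1)).2 * h1
    have : u.1 ≠ 0 ∨ u.2 ≠ 0 := by
      by_contra hcon
      push_neg at hcon
      exact hu (Prod.ext hcon.1 hcon.2)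
    rcases this with h | h
    · exact (mul_eq_zero.mp e1).resolve_left h
    · exact (mul_eq_zero.mp e2).resolve_left h
  -- angles
  have h1v : (1 : Fin k).val = 1 := by
    have h : (1 : Fin k).val = 1 % k := rfl
    rw [h]; exact Nat.mod_eq_of_lt (by omega)
  have hb1ne : b + 1 ≠ b := by
    intro hcon
    have hvv := congrArg Fin.val hcon
    rw [fin_add_val, h1v] at hvv
    have := b.isLt
    split_ifs at hvv <;> omega
  obtain ⟨R, hR, hRe⟩ := crossP_eq (w b) (w (b + 1)) (hw0 b) (hw0 _)
  have hsin : Real.sin (argIn (w (b + 1)) - argIn (w b)) = 0 := by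
    rw [hRe] at hpar
    rcases mul_eq_zero.mp hpar with h | h
    · linarith
    · exact h
  have hpi := Real.pi_pos
  have hbnd1 := argIn_nonneg (w b); have hbnd2 := argIn_lt_two_pi (w b)
  have hbnd3 := argIn_nonneg (w (b + 1)); have hbnd4 := argIn_lt_two_pi (w (b + 1))
  obtain ⟨m, hm⟩ := Real.sin_eq_zero_iff.mp hsin
  have hmrange : m = 1 ∨ m = -1 ∨ m = 0 := by
    have hlt : (m : ℝ) < 2 := by nlinarith
    have hgt : (-2 : ℝ) < m := by nlinarith
    have : m < 2 := by exact_mod_cast hlt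
    have : (-2 : ℤ) < m := by exact_mod_cast hgt
    omega
  have hne : argIn (w (b + 1)) ≠ argIn (w b) := by
    rcases lt_trichotomy (b + 1) b with h | h | h
    · exact ne_of_lt (hmono _ _ h)
    · exact absurd h hb1ne
    · exact ne_of_gt (hmono _ _ h)
  have hm0 : m ≠ 0 := by
    intro hcon
    rw [hcon] at hm
    simp at hm
    exact hne (by linarith)
  -- diff = ±π
  have hdiff : argIn (w (b + 1)) - argIn (w b) = Real.pi ∨
      argIn (w (b + 1)) - argIn (w b) = -Real.pi := by
    rcases hmrange with h | h | h
    · left; rw [h] at hm; push_cast at hm; linarith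
    · right; rw [h] at hm; push_cast at hm; linarith
    · exact absurd h hm0
  -- all other vectors strictly on negative side of w b
  have hneg : ∀ t : Fin k, t ≠ b → t ≠ b + 1 → crossP (w b) (w t) < 0 := by
    intro t htb htb1
    obtain ⟨R', hR', hRe'⟩ := crossP_eq (w b) (w t) (hw0 b) (hw0 t)
    rw [hRe']
    have hbt1 := argIn_nonneg (w t); have hbt2 := argIn_lt_two_pi (w t)
    have hsinneg : Real.sin (argIn (w t) - argIn (w b)) < 0 := by
      have hvb := b.isLt; have hvt := t.isLt
      by_cases hwrap : b.val + 1 < k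
      · -- no-wrap: b+1 has val b.val+1, diff = π
        have hv : (b + 1).val = b.val + 1 := by
          rw [fin_add_val, h1v, if_pos (by omega)]
        have hlt : b < b + 1 := by rw [Fin.lt_def, hv]; omega
        have hd : argIn (w (b + 1)) - argIn (w b) = Real.pi := by
          rcases hdiff with h | h
          · exact h
          · exfalso; have := hmono _ _ hlt; linarith
        rcases lt_trichotomy t b with h | h | h
        · -- t < b : θt - θb ∈ (-π, 0)
          have := hmono _ _ h
          apply Real.sin_neg_of_neg_of_neg_pi_lt (by linarith)
          -- need θb < π: θb + π = θ(b+1) < 2π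
          have := argIn_lt_two_pi (w (b + 1))
          linarith
        · exact absurd h htb
        · -- t > b, t ≠ b+1 ⇒ t > b+1
          have hgt : b + 1 < t := by
            rw [Fin.lt_def, hv]
            rw [Fin.lt_def] at h
            have : t.val ≠ (b + 1).val := fun hc => htb1 (Fin.ext hc)
            rw [hv] at this
            omega
          have h2 := hmono _ _ hgt
          have hx : Real.pi < argIn (w t) - argIn (w b) := by linarith
          have hx2 : argIn (w t) - argIn (w b) < 2 * Real.pi := by linarith
          have : 0 < Real.sin (argIn (w t) - argIn (w b) - Real.pi) :=
            Real.sin_pos_of_pos_of_lt_pi (by linarith) (by linarith)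
          rw [Real.sin_sub_pi] at this
          linarith
      · -- wrap: b.val = k-1, b+1 = 0, diff = -π
        have hbv : b.val = k - 1 := by omega
        have hv : (b + 1).val = 0 := by
          rw [fin_add_val, h1v, if_neg (by omega)]
          omega
        have hlt : b + 1 < b := by rw [Fin.lt_def, hv]; omega
        have hd : argIn (w (b + 1)) - argIn (w b) = -Real.pi := by
          rcases hdiff with h | h
          · exfalso; have := hmono _ _ hlt; linarith
          · exact h
        -- all other t: b+1 < t < b
        have hlow : b + 1 < t := by
          rw [Fin.lt_def, hv]
          have : t.val ≠ 0 := by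
            intro hc; exact htb1 (Fin.ext (by rw [hv, hc]))
          omega
        have hhigh : t < b := by
          rw [Fin.lt_def, hbv]
          have : t.val ≠ b.val := fun hc => htb (Fin.ext hc)
          omega
        have l1 := hmono _ _ hlow
        have l2 := hmono _ _ hhigh
        apply Real.sin_neg_of_neg_of_neg_pi_lt (by linarith) (by linarith)
    nlinarith
  -- sum contradiction
  have hsub : ({b, b + 1} : Finset (Fin k)) ⊆ Finset.univ := Finset.subset_univ _
  have hsum2 : ∑ t ∈ Finset.univ \ {b, b + 1}, w t = -(w b + w (b + 1)) := by
    rw [Finset.sum_sdiff_eq_sub hsub, hsum, Finset.sum_pair (Ne.symm hb1ne)]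
    abel
  have hcs : crossP (w b) (∑ t ∈ Finset.univ \ {b, b + 1}, w t) = 0 := by
    rw [hsum2]
    have : crossP (w b) (w b) = 0 := by unfold crossP; ring
    unfold crossP at this hpar ⊢
    simp only [Prod.fst_neg, Prod.snd_neg, Prod.fst_add, Prod.snd_add]
    nlinarith [this, hpar]
  have hlt : crossP (w b) (∑ t ∈ Finset.univ \ {b, b + 1}, w t) < 0 := by
    rw [crossP_sum]
    apply Finset.sum_neg
    · intro t ht
      rw [Finset.mem_sdiff, Finset.mem_insert, Finset.mem_singleton] at ht
      push_neg at ht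
      exact hneg t ht.2.1 ht.2.2
    · -- nonempty
      have hcard : ({b, b + 1} : Finset (Fin k)).card ≤ 2 := Finset.card_insert_le _ _ |>.trans (by simp)
      have : 0 < (Finset.univ \ {b, b + 1} : Finset (Fin k)).card := by
        rw [Finset.card_sdiff_of_subset hsub]
        simp only [Finset.card_univ, Fintype.card_fin]
        omega
      exact Finset.card_pos.mp this
  linarith

end geom
section face
variable {k : ℕ} [NeZero k]

lemma sum_Ioc_eq (c : Fin k → ℝ) {A B : Fin k} (h : A ≤ B) :
    ∑ t ∈ Finset.Ioc A B, c t = (∑ t ∈ Finset.Iic B, c t) - ∑ t ∈ Finset.Iic A, c t := by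
  have hu : Finset.Iic A ∪ Finset.Ioc A B = Finset.Iic B := by
    ext x
    rw [Fin.le_def] at h
    simp only [Finset.mem_union, Finset.mem_Iic, Finset.mem_Ioc, Fin.le_def, Fin.lt_def]
    omega
  have hd : Disjoint (Finset.Iic A) (Finset.Ioc A B) := by
    rw [Finset.disjoint_left]; intro x hx hx2
    rw [Finset.mem_Iic] at hx; rw [Finset.mem_Ioc] at hx2
    exact absurd hx2.1 (not_lt.mpr hx)
  rw [← hu, Finset.sum_union hd]; ring

lemma first_neg_pos (c : Fin k → ℝ) (S : Finset (Fin k))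
    (hsum0 : ∑ t ∈ S, c t = 0)
    (hpartial : ∀ t ∈ S, ∑ t' ∈ S.filter (fun x => x ≤ t), c t' ≤ 0)
    (hex : ∃ t ∈ S, c t ≠ 0) :
    ∃ t1 ∈ S, ∃ t2 ∈ S, t1 ≤ t2 ∧ c t1 < 0 ∧ 0 < c t2 := by
  obtain ⟨te, hteS, htene⟩ := hex
  have hne : (S.filter (fun t => c t ≠ 0)).Nonempty :=
    ⟨te, Finset.mem_filter.mpr ⟨hteS, htene⟩⟩
  set t1 := (S.filter (fun t => c t ≠ 0)).min' hne with ht1def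
  have ht1mem := (S.filter (fun t => c t ≠ 0)).min'_mem hne
  rw [Finset.mem_filter] at ht1mem
  obtain ⟨ht1S, ht1ne⟩ := ht1mem
  have ht1min : ∀ t ∈ S, c t ≠ 0 → t1 ≤ t := fun t ht hct =>
    Finset.min'_le _ _ (Finset.mem_filter.mpr ⟨ht, hct⟩)
  -- c t1 < 0
  have hsplit : S.filter (fun x => x ≤ t1) = insert t1 (S.filter (fun x => x < t1)) := by
    ext x
    simp only [Finset.mem_filter, Finset.mem_insert]
    constructor
    · rintro ⟨hxS, hxle⟩
      rcases eq_or_lt_of_le hxle with h | h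
      · exact Or.inl h
      · exact Or.inr ⟨hxS, h⟩
    · rintro (rfl | ⟨hxS, hxlt⟩)
      · exact ⟨ht1S, le_refl _⟩
      · exact ⟨hxS, le_of_lt hxlt⟩
  have hzero : ∑ t ∈ S.filter (fun x => x < t1), c t = 0 := by
    apply Finset.sum_eq_zero
    intro x hx
    rw [Finset.mem_filter] at hx
    by_contra hcx
    exact absurd hx.2 (not_lt.mpr (ht1min x hx.1 hcx))
  have ht1neg : c t1 < 0 := by
    have := hpartial t1 ht1S
    rw [hsplit, Finset.sum_insert (by simp), hzero] at this
    rcases lt_or_eq_of_le (by linarith : c t1 ≤ 0) with h | h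
    · exact h
    · exact absurd h ht1ne
  -- positive element
  have hpos : ∃ t2 ∈ S, 0 < c t2 := by
    by_contra hcon
    push_neg at hcon
    have : ∑ t ∈ S, c t < ∑ t ∈ S, (0 : ℝ) :=
      Finset.sum_lt_sum hcon ⟨t1, ht1S, ht1neg⟩
    rw [Finset.sum_const_zero] at this
    linarith
  obtain ⟨t2, ht2S, ht2pos⟩ := hpos
  exact ⟨t1, ht1S, t2, ht2S, ht1min t2 ht2S (by linarith), ht1neg, ht2pos⟩

end face
section bigface
variable {k : ℕ} [NeZero k] {w : Fin k → ℝ × ℝ}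

lemma crossP_sub (a x y : ℝ × ℝ) : crossP a (x - y) = crossP a x - crossP a y := by
  unfold crossP
  simp only [Prod.fst_sub, Prod.snd_sub]
  ring

/-- all maximizers of a linear functional lie in a single edge segment -/
lemma face_in_edge (hk : 3 ≤ k)
    (hmono : ∀ i j : Fin k, i < j → argIn (w i) < argIn (w j))
    (hw0 : ∀ i, w i ≠ 0) (hsum : ∑ i, w i = 0)
    (u : ℝ × ℝ) (hu : u ≠ 0) (a : Fin k)
    (hmax : ∀ i : Fin k, crossP u (partialSum w i) ≤ crossP u (partialSum w a)) :
    ∃ j : Fin k, ∀ i : Fin k,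
      crossP u (partialSum w i) = crossP u (partialSum w a) →
      partialSum w i ∈ segment ℝ (∑ t ∈ Finset.Iio j, w t)
        ((∑ t ∈ Finset.Iio j, w t) + w j) := by
  have hk2 : 2 ≤ k := by omega
  have h1v : (1 : Fin k).val = 1 := by
    have h : (1 : Fin k).val = 1 % k := rfl
    rw [h]; exact Nat.mod_eq_of_lt (by omega)
  set j0 : Fin k := a + 1 with hj0
  set c : Fin k → ℝ := fun t => crossP u (w (j0 + t)) with hc
  set E : Fin k → ℝ := fun T => ∑ t ∈ Finset.Iic T, c t with hE0
  have hppsa : ∑ t ∈ Finset.Iio j0, w t = partialSum w a := pps w hk2 hsum a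
  have hE : ∀ T, E T = crossP u (partialSum w (j0 + T)) - crossP u (partialSum w a) := by
    intro T
    have : E T = crossP u (∑ t ∈ Finset.Iic ((j0 + T) - j0), w (j0 + t)) := by
      rw [add_sub_cancel_left, hE0, hc, crossP_sum]
    rw [this, cyc_sum w hsum j0 (j0 + T), hppsa, crossP_sub]
  have hEneg : ∀ T, E T ≤ 0 := by
    intro T; rw [hE T]; linarith [hmax (j0 + T)]
  -- last index
  set Tl : Fin k := ⟨k - 1, by omega⟩ with hTl
  have h1Tl : (1 : Fin k) + Tl = 0 := by
    apply Fin.ext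
    rw [fin_add_val, h1v]
    have h0 : (0 : Fin k).val = 0 := rfl
    rw [if_neg (by simp only [hTl]; omega)]
    simp only [hTl, h0]
    omega
  have haTl : j0 + Tl = a := by
    rw [hj0, add_assoc, h1Tl, add_zero]
  have hETl : E Tl = 0 := by
    rw [hE, haTl]; ring
  -- second-to-last
  set Tl2 : Fin k := ⟨k - 2, by omega⟩ with hTl2
  have hTl2Tl : Tl2 + 1 = Tl := by
    apply Fin.ext
    rw [fin_add_val, h1v, if_pos (by simp only [hTl2]; omega)]
    simp only [hTl2, hTl]
    omega
  set bb : Fin k := j0 + Tl2 with hbb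
  have hbba : bb + 1 = a := by
    rw [hbb, add_assoc, hTl2Tl, haTl]
  -- translation of consecutive c values
  have hcw : ∀ t : Fin k, c t = crossP u (w (j0 + t)) := fun t => rfl
  have hc0 : c 0 = crossP u (w j0) := by rw [hcw, add_zero]
  have hc1 : c 1 = crossP u (w (j0 + 1)) := hcw 1
  have hcTl : c Tl = crossP u (w a) := by rw [hcw, haTl]
  have hcTl2 : c Tl2 = crossP u (w bb) := hcw Tl2
  -- anti specialization
  have hanti : ∀ b : Fin k, crossP u (w b) = 0 → crossP u (w (b + 1)) = 0 → False :=
    fun b hb1 hb2 => anti hmono hw0 hsum hk u hu b hb1 hb2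
  -- four-pattern specialization
  have hF2 : ∀ t1 t2 t3 t4 : Fin k, t1 ≤ t2 → t2 ≤ t3 → t3 ≤ t4 →
      c t1 < 0 → 0 < c t2 → c t3 < 0 → 0 < c t4 → False := by
    intro t1 t2 t3 t4 h12 h23 h34 s1 s2 s3 s4
    set α := argIn u with hα
    have hsin : ∀ t : Fin k, ∃ R : ℝ, 0 < R ∧
        c t = R * Real.sin (lift w j0 t - α) := by
      intro t
      obtain ⟨R, hR, hRe⟩ := crossP_eq u (w (j0 + t)) hu (hw0 _)
      exact ⟨R, hR, by rw [hcw, hRe, lift_sin]⟩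
    obtain ⟨R1, hR1, he1⟩ := hsin t1
    obtain ⟨R2, hR2, he2⟩ := hsin t2
    obtain ⟨R3, hR3, he3⟩ := hsin t3
    obtain ⟨R4, hR4, he4⟩ := hsin t4
    apply four_pattern (x1 := lift w j0 t1 - α) (x2 := lift w j0 t2 - α)
      (x3 := lift w j0 t3 - α) (x4 := lift w j0 t4 - α)
    · linarith [lift_mono hmono j0 h12]
    · linarith [lift_mono hmono j0 h23]
    · linarith [lift_mono hmono j0 h34]
    · linarith [lift_ub hmono j0 t4, lift_lb hmono j0 t1]
    · nlinarith [he1 ▸ s1]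
    · nlinarith [he2 ▸ s2]
    · nlinarith [he3 ▸ s3]
    · nlinarith [he4 ▸ s4]
  -- min of zero set
  set ZS : Finset (Fin k) := Finset.univ.filter (fun T => E T = 0) with hZS
  have hZSmem : ∀ T : Fin k, T ∈ ZS ↔ E T = 0 := by
    intro T
    rw [hZS, Finset.mem_filter]
    exact ⟨fun h => h.2, fun h => ⟨Finset.mem_univ T, h⟩⟩
  have hSne : ZS.Nonempty := ⟨Tl, (hZSmem Tl).mpr hETl⟩
  set T0 := ZS.min' hSne with hT0def
  have hT0 : E T0 = 0 := (hZSmem T0).mp (ZS.min'_mem hSne)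
  have hT0min : ∀ T, E T = 0 → T0 ≤ T := fun T hT =>
    ZS.min'_le T ((hZSmem T).mpr hT)
  have hT0Tl : T0 ≤ Tl := hT0min Tl hETl
  have hleTl : ∀ T : Fin k, T ≤ Tl := by
    intro T; rw [Fin.le_def]; simp only [hTl]; have := T.isLt; omega
  -- E difference formula
  have hEdiff : ∀ {A B : Fin k}, A ≤ B → ∑ t ∈ Finset.Ioc A B, c t = E B - E A :=
    fun {A B} h => sum_Ioc_eq c h
  -- partial sums over Ioc pieces
  have hpartialIoc : ∀ (A : Fin k), E A = 0 → ∀ t ∈ Finset.Ioc A Tl,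
      ∑ t' ∈ (Finset.Ioc A Tl).filter (fun x => x ≤ t), c t' ≤ 0 := by
    intro A hA t ht
    rw [Finset.mem_Ioc] at ht
    have hfe : (Finset.Ioc A Tl).filter (fun x => x ≤ t) = Finset.Ioc A t := by
      ext x
      simp only [Finset.mem_filter, Finset.mem_Ioc]
      refine ⟨fun ⟨⟨h1, _⟩, h3⟩ => ⟨h1, h3⟩, fun ⟨h1, h2⟩ => ⟨⟨h1, le_trans h2 ht.2⟩, h2⟩⟩
    rw [hfe, hEdiff (le_of_lt ht.1), hA]
    linarith [hEneg t]
  by_cases htail : ∀ t, T0 < t → c t = 0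
  -- CASE I
  · -- subcases on T0.val
    rcases lt_trichotomy T0.val (k - 2) with hT0v | hT0v | hT0v
    · -- T0 ≤ k-3 : contradiction via anti
      exfalso
      apply hanti bb
      · rw [← hcTl2]
        apply htail
        rw [Fin.lt_def]; simp only [hTl2]; omega
      · rw [hbba, ← hcTl]
        apply htail
        rw [Fin.lt_def]; simp only [hTl]; omega
    · -- T0 = k-2 : maximizers are s_{bb} and s_a, edge a
      refine ⟨a, fun i hieq => ?_⟩
      have hET : E (i - j0) = 0 := by
        rw [hE, add_comm j0 (i - j0), sub_add_cancel, hieq]; ring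
      have hTge := hT0min _ hET
      rw [Fin.le_def, hT0v] at hTge
      have hTle := hleTl (i - j0)
      rw [Fin.le_def] at hTle
      simp only [hTl] at hTle
      have hia : i = bb ∨ i = a := by
        rcases eq_or_lt_of_le hTge with h | h
        · left
          have : i - j0 = Tl2 := Fin.ext (by simp only [hTl2]; omega)
          rw [hbb, ← this, add_comm, sub_add_cancel]
        · right
          have : i - j0 = Tl := Fin.ext (by simp only [hTl]; omega)
          rw [← haTl, ← this, add_comm, sub_add_cancel]
      have hpa : ∑ t ∈ Finset.Iio a, w t = partialSum w bb := by
        rw [← hbba]; exact pps w hk2 hsum bb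
      rcases hia with h | h
      · rw [h, hpa]; exact left_mem_segment ℝ _ _
      · rw [h, pic w a]; exact right_mem_segment ℝ _ _
    · -- T0 = k-1 : unique maximizer s_a, edge j0
      have hT0eq : T0 = Tl := Fin.ext (by simp only [hTl]; have := T0.isLt; omega)
      refine ⟨j0, fun i hieq => ?_⟩
      have hET : E (i - j0) = 0 := by
        rw [hE, add_comm j0 (i - j0), sub_add_cancel, hieq]; ring
      have hTge := hT0min _ hET
      rw [hT0eq] at hTge
      have : i - j0 = Tl := le_antisymm (hleTl _) hTge
      have hieqa : i = a := by rw [← haTl, ← this, add_comm, sub_add_cancel]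
      rw [hieqa, hppsa]
      exact left_mem_segment ℝ _ _
  -- CASE II
  · push_neg at htail
    obtain ⟨ts, hts1, hts2⟩ := htail
    -- head is all zero
    have hhead : ∀ t, t ≤ T0 → c t = 0 := by
      by_contra hcon
      push_neg at hcon
      obtain ⟨th, hth1, hth2⟩ := hcon
      obtain ⟨t1, ht1m, t2, ht2m, h12, hn1, hp2⟩ :=
        first_neg_pos c (Finset.Iic T0) hT0 (by
          intro t ht
          rw [Finset.mem_Iic] at ht
          have hfe : (Finset.Iic T0).filter (fun x => x ≤ t) = Finset.Iic t := by
            ext x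
            simp only [Finset.mem_filter, Finset.mem_Iic]
            exact ⟨fun h => h.2, fun h => ⟨le_trans h ht, h⟩⟩
          rw [hfe]
          exact hEneg t) ⟨th, Finset.mem_Iic.mpr hth1, hth2⟩
      obtain ⟨t3, ht3m, t4, ht4m, h34, hn3, hp4⟩ :=
        first_neg_pos c (Finset.Ioc T0 Tl) (by rw [hEdiff hT0Tl, hETl, hT0]; ring)
          (hpartialIoc T0 hT0)
          ⟨ts, Finset.mem_Ioc.mpr ⟨hts1, hleTl ts⟩, hts2⟩
      rw [Finset.mem_Iic] at ht2m
      rw [Finset.mem_Ioc] at ht3m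
      exact hF2 t1 t2 t3 t4 h12 (le_trans ht2m (le_of_lt ht3m.1)) h34 hn1 hp2 hn3 hp4
    -- T0 must be 0 (else anti at j0)
    have hc00 : c 0 = 0 := hhead 0 (Fin.zero_le T0)
    have hT00 : T0 = 0 := by
      by_contra hcon
      have hT0pos : 0 < T0.val := by
        rcases Nat.eq_zero_or_pos T0.val with h | h
        · exact absurd (Fin.ext h) hcon
        · exact h
      apply hanti j0
      · rw [← hc0]; exact hc00
      · rw [← hc1]
        apply hhead
        rw [Fin.le_def, h1v]; omega
    -- zero set is {0, Tl}
    refine ⟨j0, fun i hieq => ?_⟩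
    have hET0 : E (i - j0) = 0 := by
      rw [hE, add_comm j0 (i - j0), sub_add_cancel, hieq]; ring
    obtain ⟨T', hT'def⟩ : ∃ T', T' = i - j0 := ⟨_, rfl⟩
    have hET : E T' = 0 := by rw [hT'def]; exact hET0
    have hT'cases : T' = 0 ∨ T' = Tl := by
      by_contra hcon
      push_neg at hcon
      obtain ⟨hT'0, hT'Tl⟩ := hcon
      have hT'v : 0 < T'.val ∧ T'.val < k - 1 := by
        constructor
        · rcases Nat.eq_zero_or_pos T'.val with h | h
          · exact absurd (Fin.ext h) hT'0
          · exact h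
        · have := hleTl T'
          rw [Fin.le_def] at this
          simp only [hTl] at this
          rcases lt_or_eq_of_le this with h | h
          · exact h
          · exact absurd (Fin.ext (by simp only [hTl]; omega)) hT'Tl
      have h0T' : (0 : Fin k) < T' := by rw [Fin.lt_def]; exact hT'v.1
      have hT'Tlle : T' ≤ Tl := hleTl T'
      have hE00 : E 0 = 0 := by rw [← hT00]; exact hT0
      -- three subcases
      by_cases hmidA : ∀ t ∈ Finset.Ioc (0 : Fin k) T', c t = 0
      · -- c 0 = c 1 = 0 : anti at j0
        apply hanti j0
        · rw [← hc0]; exact hc00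
        · rw [← hc1]
          apply hmidA
          rw [Finset.mem_Ioc]
          constructor
          · rw [Fin.lt_def, h1v]; exact Nat.zero_lt_one
          · rw [Fin.le_def, h1v]; omega
      · by_cases hmidB : ∀ t ∈ Finset.Ioc T' Tl, c t = 0
        · -- tail after T' all zero
          rcases lt_or_eq_of_le (by omega : T'.val ≤ k - 2) with hTv | hTv
          · -- T' ≤ k-3 : c Tl2 = c Tl = 0, anti at bb
            apply hanti bb
            · rw [← hcTl2]
              apply hmidB
              rw [Finset.mem_Ioc]
              constructor
              · rw [Fin.lt_def]; simp only [hTl2]; omega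
              · rw [Fin.le_def]; simp only [hTl2, hTl]; omega
            · rw [hbba, ← hcTl]
              apply hmidB
              rw [Finset.mem_Ioc]
              constructor
              · rw [Fin.lt_def]; simp only [hTl]; omega
              · exact le_refl _
          · -- T' = k-2 : c Tl = 0 and c 0 = 0, anti at a
            apply hanti a
            · rw [← hcTl]
              apply hmidB
              rw [Finset.mem_Ioc]
              constructor
              · rw [Fin.lt_def]; simp only [hTl]; omega
              · exact le_refl _
            · rw [← hj0, ← hc0]; exact hc00
        · -- nonzeros on both sides : four pattern
          push_neg at hmidA hmidB
          obtain ⟨ta, hta1, hta2⟩ := hmidA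
          obtain ⟨tb, htb1, htb2⟩ := hmidB
          obtain ⟨t1, ht1m, t2, ht2m, h12, hn1, hp2⟩ :=
            first_neg_pos c (Finset.Ioc 0 T') (by rw [hEdiff (le_of_lt h0T'), hET, hE00]; ring)
              (by
                intro t ht
                rw [Finset.mem_Ioc] at ht
                have hfe : (Finset.Ioc (0:Fin k) T').filter (fun x => x ≤ t) =
                    Finset.Ioc 0 t := by
                  ext x
                  simp only [Finset.mem_filter, Finset.mem_Ioc]
                  exact ⟨fun ⟨⟨a1, _⟩, a3⟩ => ⟨a1, a3⟩,
                    fun ⟨a1, a2⟩ => ⟨⟨a1, le_trans a2 ht.2⟩, a2⟩⟩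
                rw [hfe, hEdiff (le_of_lt ht.1), hE00]
                linarith [hEneg t]) ⟨ta, hta1, hta2⟩
          obtain ⟨t3, ht3m, t4, ht4m, h34, hn3, hp4⟩ :=
            first_neg_pos c (Finset.Ioc T' Tl) (by rw [hEdiff hT'Tlle, hETl, hET]; ring)
              (hpartialIoc T' hET) ⟨tb, htb1, htb2⟩
          rw [Finset.mem_Ioc] at ht2m ht3m
          exact hF2 t1 t2 t3 t4 h12 (le_trans ht2m.2 (le_of_lt ht3m.1)) h34 hn1 hp2 hn3 hp4
    -- conclude
    rcases hT'cases with h | h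
    · have : i = j0 := by
        rw [← add_zero j0, ← h, hT'def, add_comm, sub_add_cancel]
      rw [this, pic w j0]
      exact right_mem_segment ℝ _ _
    · have : i = a := by
        rw [← haTl, ← h, hT'def, add_comm, sub_add_cancel]
      rw [this, hppsa]
      exact left_mem_segment ℝ _ _

end bigface
section lat

/-- integer points on a primitive segment -/
lemma lattice_on_segment {P : ℝ × ℝ} {n : ℕ} (hn : 0 < n) {v : ℤ × ℤ}
    (hv : Int.gcd v.1 v.2 = 1) {x : ℝ × ℝ}
    (hx : x ∈ segment ℝ P (P + (n : ℝ) • (((v.1 : ℝ)), ((v.2 : ℝ)))))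
    (hP : ∃ pa pb : ℤ, P = ((pa : ℝ), (pb : ℝ)))
    (hxl : ∃ a b : ℤ, x = ((a : ℝ), (b : ℝ))) :
    ∃ m : ℕ, m ≤ n ∧ x = P + (m : ℝ) • (((v.1 : ℝ)), ((v.2 : ℝ))) := by
  obtain ⟨pa, pb, rfl⟩ := hP
  obtain ⟨a, b, rfl⟩ := hxl
  rw [segment_eq_image'] at hx
  obtain ⟨t, ht, hteq⟩ := hx
  rw [Set.mem_Icc] at ht
  have hteq : ((pa:ℝ), (pb:ℝ)) + t • (((pa:ℝ), (pb:ℝ)) + (n:ℝ) • ((v.1:ℝ), (v.2:ℝ)) - ((pa:ℝ), (pb:ℝ))) = ((a:ℝ), (b:ℝ)) := hteq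
  have hsimp : ((pa:ℝ), (pb:ℝ)) + (n:ℝ) • ((v.1:ℝ), (v.2:ℝ)) - ((pa:ℝ), (pb:ℝ))
      = (n:ℝ) • ((v.1:ℝ), (v.2:ℝ)) := by abel
  rw [hsimp] at hteq
  have h1 : (a : ℝ) = pa + t * n * v.1 := by
    have := congrArg Prod.fst hteq
    simp only [Prod.fst_add, Prod.smul_fst, smul_eq_mul] at this
    rw [← this]; ring
  have h2 : (b : ℝ) = pb + t * n * v.2 := by
    have := congrArg Prod.snd hteq
    simp only [Prod.snd_add, Prod.smul_snd, smul_eq_mul] at this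
    rw [← this]; ring
  obtain ⟨cc, dd, hcd⟩ : IsCoprime v.1 v.2 := Int.isCoprime_iff_gcd_eq_one.mpr hv
  set M : ℤ := cc * (a - pa) + dd * (b - pb) with hM
  have hMr : (M : ℝ) = t * n := by
    push_cast [hM]
    have hcdr : (cc : ℝ) * v.1 + (dd : ℝ) * v.2 = 1 := by exact_mod_cast congrArg (Int.cast : ℤ → ℝ) hcd
    linear_combination (cc:ℝ) * h1 + (dd:ℝ) * h2 + (t * (n:ℝ)) * hcdr
  have hM0 : 0 ≤ M := by
    have : (0:ℝ) ≤ (M:ℝ) := by rw [hMr]; exact mul_nonneg ht.1 (Nat.cast_nonneg n)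
    exact_mod_cast this
  have hMn : M ≤ (n : ℤ) := by
    have : (M:ℝ) ≤ (n:ℝ) := by rw [hMr]; nlinarith [ht.2, ht.1]
    exact_mod_cast this
  refine ⟨M.toNat, ?_, ?_⟩
  · omega
  · have hMt : ((M.toNat : ℕ) : ℝ) = (M : ℝ) := by
      exact_mod_cast congrArg (Int.cast : ℤ → ℝ) (Int.toNat_of_nonneg hM0)
    rw [smul_smul] at hteq
    rw [hMt, hMr]
    exact hteq.symm

/-- partial sums of integral families are lattice points -/
lemma sum_lattice {k : ℕ} (n : Fin k → ℕ) (v : Fin k → ℤ × ℤ) (w : Fin k → ℝ × ℝ)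
    (hw : ∀ i, w i = (n i : ℝ) • (((v i).1 : ℝ), ((v i).2 : ℝ)))
    (S : Finset (Fin k)) :
    ∃ A B : ℤ, ∑ i ∈ S, w i = ((A : ℝ), (B : ℝ)) := by
  refine ⟨∑ i ∈ S, (n i : ℤ) * (v i).1, ∑ i ∈ S, (n i : ℤ) * (v i).2, ?_⟩
  apply Prod.ext
  · rw [Prod.fst_sum]
    push_cast
    apply Finset.sum_congr rfl
    intro i _
    rw [hw i]
    simp [Prod.smul_fst]
  · rw [Prod.snd_sum]
    push_cast
    apply Finset.sum_congr rfl
    intro i _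
    rw [hw i]
    simp [Prod.smul_snd]

end lat
section dir1
variable {k : ℕ} [NeZero k] {w : Fin k → ℝ × ℝ}

lemma halfplane_convex (q p : ℝ × ℝ) : Convex ℝ {y : ℝ × ℝ | 0 ≤ crossP q (y - p)} := by
  intro y1 hy1 y2 hy2 α β hα hβ hαβ
  simp only [Set.mem_setOf_eq] at hy1 hy2 ⊢
  have hid : crossP q (α • y1 + β • y2 - p) =
      α * crossP q (y1 - p) + β * crossP q (y2 - p) := by
    unfold crossP
    simp only [Prod.fst_add, Prod.snd_add, Prod.fst_sub, Prod.snd_sub, Prod.smul_fst,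
      Prod.smul_snd, smul_eq_mul]
    linear_combination (q.1 * p.2 - q.2 * p.1) * hαβ
  rw [hid]
  positivity

lemma hull_subset_halfplane
    (hmono : ∀ i j : Fin k, i < j → argIn (w i) < argIn (w j))
    (hw0 : ∀ i, w i ≠ 0) (hsum : ∑ i, w i = 0) (j : Fin k) :
    convexHull ℝ (Set.range (partialSum w)) ⊆
      {y : ℝ × ℝ | 0 ≤ crossP (w j) (y - ∑ t ∈ Finset.Iio j, w t)} := by
  apply convexHull_min
  · rintro _ ⟨i, rfl⟩
    exact lemS hmono hw0 hsum j i
  · exact halfplane_convex _ _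

lemma edge_in_frontier (hk : 3 ≤ k)
    (hmono : ∀ i j : Fin k, i < j → argIn (w i) < argIn (w j))
    (hw0 : ∀ i, w i ≠ 0) (hsum : ∑ i, w i = 0) (j : Fin k) (x : ℝ × ℝ)
    (hxseg : x ∈ segment ℝ (∑ t ∈ Finset.Iio j, w t) ((∑ t ∈ Finset.Iio j, w t) + w j)) :
    x ∈ frontier (convexHull ℝ (Set.range (partialSum w))) := by
  have hk2 : 2 ≤ k := by omega
  set P := convexHull ℝ (Set.range (partialSum w)) with hP
  have hclosed : IsClosed P :=
    ((Set.finite_range (partialSum w)).isCompact_convexHull ℝ).isClosed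
  rw [hclosed.frontier_eq, Set.mem_diff]
  set pj := ∑ t ∈ Finset.Iio j, w t with hpj
  have hpjmem : pj ∈ P := by
    have : pj = partialSum w (j - 1) := by
      rw [← pps w hk2 hsum (j - 1), sub_add_cancel]
    rw [this]
    exact subset_convexHull ℝ _ (Set.mem_range_self _)
  have hsjmem : pj + w j ∈ P := by
    rw [pic w j]
    exact subset_convexHull ℝ _ (Set.mem_range_self _)
  constructor
  · exact (convex_convexHull ℝ _).segment_subset hpjmem hsjmem hxseg
  · -- not interior
    intro hint
    obtain ⟨ε, hε, hball⟩ := Metric.isOpen_iff.mp isOpen_interior x hint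
    set q : ℝ × ℝ := ((w j).2, -(w j).1) with hq
    have hqnorm : 0 < ‖q‖ := by
      rw [norm_pos_iff]
      intro hq0
      apply hw0 j
      have h1 := congrArg Prod.fst hq0
      have h2 := congrArg Prod.snd hq0
      simp only [hq, Prod.fst_zero, Prod.snd_zero] at h1 h2
      apply Prod.ext
      · simpa using h2
      · exact h1
    set δ := ε / (2 * ‖q‖) with hδ
    have hδpos : 0 < δ := by positivity
    set y := x + δ • q with hy
    have hymem : y ∈ P := by
      apply interior_subset
      apply hball
      rw [Metric.mem_ball, dist_eq_norm]
      have : y - x = δ • q := by rw [hy]; abel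
      rw [this, norm_smul, Real.norm_eq_abs, abs_of_pos hδpos, hδ]
      rw [div_mul_eq_mul_div, mul_comm]
      rw [div_lt_iff₀ (by positivity)]
      nlinarith [hqnorm, hε]
    have hyhalf := hull_subset_halfplane hmono hw0 hsum j hymem
    simp only [Set.mem_setOf_eq] at hyhalf
    -- compute crossP (w j) (y - pj)
    have hxval : crossP (w j) (x - pj) = 0 := by
      rw [segment_eq_image'] at hxseg
      obtain ⟨t, _, hteq⟩ := hxseg
      have hteq : pj + t • (pj + w j - pj) = x := hteq
      rw [show pj + w j - pj = w j by abel] at hteq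
      rw [← hteq, show pj + t • w j - pj = t • w j by abel]
      unfold crossP
      simp only [Prod.smul_fst, Prod.smul_snd, smul_eq_mul]
      ring
    have hyval : crossP (w j) (y - pj) = crossP (w j) (x - pj) + δ * crossP (w j) q := by
      rw [hy, show x + δ • q - pj = (x - pj) + δ • q by abel]
      unfold crossP
      simp only [Prod.fst_add, Prod.snd_add, Prod.smul_fst, Prod.smul_snd, smul_eq_mul]
      ring
    have hcq : crossP (w j) q < 0 := by
      unfold crossP
      simp only [hq]
      have : ¬ ((w j).1 = 0 ∧ (w j).2 = 0) := by
        intro hc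
        exact hw0 j (Prod.ext hc.1 hc.2)
      rcases not_and_or.mp this with h | h
      · nlinarith [sq_nonneg (w j).1, sq_nonneg (w j).2, sq_pos_of_ne_zero h]
      · nlinarith [sq_nonneg (w j).1, sq_nonneg (w j).2, sq_pos_of_ne_zero h]
    rw [hyval, hxval] at hyhalf
    nlinarith

lemma interior_nonempty (hk : 3 ≤ k)
    (hmono : ∀ i j : Fin k, i < j → argIn (w i) < argIn (w j))
    (hw0 : ∀ i, w i ≠ 0) (hsum : ∑ i, w i = 0) :
    (interior (convexHull ℝ (Set.range (partialSum w)))).Nonempty := by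
  have hk2 : 2 ≤ k := by omega
  rw [(convex_convexHull ℝ _).interior_nonempty_iff_affineSpan_eq_top, affineSpan_convexHull]
  -- independent pair of edge vectors
  have hpair : ∃ i0 i1 : Fin k, crossP (w i0) (w i1) ≠ 0 := by
    by_contra hcon
    push_neg at hcon
    have hzero : ∀ i0 i1 : Fin k, Real.sin (argIn (w i1) - argIn (w i0)) = 0 := by
      intro i0 i1
      obtain ⟨R, hR, hRe⟩ := crossP_eq (w i0) (w i1) (hw0 i0) (hw0 i1)
      have := hcon i0 i1
      rw [hRe] at this
      rcases mul_eq_zero.mp this with h | h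
      · linarith
      · exact h
    have hpi := Real.pi_pos
    have f0 : Fin k := ⟨0, by omega⟩
    have f1 : Fin k := ⟨1, by omega⟩
    have f2 : Fin k := ⟨2, by omega⟩
    have key : ∀ i1 : Fin k, (⟨0, by omega⟩ : Fin k) < i1 →
        argIn (w i1) - argIn (w ⟨0, by omega⟩) = Real.pi := by
      intro i1 hlt
      obtain ⟨m, hm⟩ := Real.sin_eq_zero_iff.mp (hzero ⟨0, by omega⟩ i1)
      have hlt2 := hmono _ _ hlt
      have b1 := argIn_nonneg (w ⟨0, by omega⟩); have b2 := argIn_lt_two_pi (w ⟨0, by omega⟩)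
      have b3 := argIn_nonneg (w i1); have b4 := argIn_lt_two_pi (w i1)
      have hm1 : m = 1 := by
        have hgt : (0 : ℝ) < m := by nlinarith
        have hlt3 : (m : ℝ) < 2 := by nlinarith
        have : (0 : ℤ) < m := by exact_mod_cast hgt
        have : m < 2 := by exact_mod_cast hlt3
        omega
      rw [hm1] at hm
      push_cast at hm
      linarith
    have h1 := key ⟨1, by omega⟩ (by rw [Fin.lt_def]; norm_num)
    have h2 := key ⟨2, by omega⟩ (by rw [Fin.lt_def]; norm_num)
    have := hmono (⟨1, by omega⟩ : Fin k) (⟨2, by omega⟩ : Fin k) (by rw [Fin.lt_def]; norm_num)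
    linarith
  obtain ⟨i0, i1, hD⟩ := hpair
  -- edge vectors are in the vector span
  have hvs : ∀ i : Fin k, w i ∈ vectorSpan ℝ (Set.range (partialSum w)) := by
    intro i
    have hwi : w i = partialSum w i - partialSum w (i - 1) := by
      have e1 : (∑ t ∈ Finset.Iio i, w t) + w i = partialSum w i := pic w i
      have e2 : ∑ t ∈ Finset.Iio i, w t = partialSum w (i - 1) := by
        rw [← pps w hk2 hsum (i - 1), sub_add_cancel]
      rw [← e1, e2]; abel
    rw [hwi]
    exact vsub_mem_vectorSpan ℝ (Set.mem_range_self _) (Set.mem_range_self _)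
  rw [AffineSubspace.affineSpan_eq_top_iff_vectorSpan_eq_top_of_nonempty ℝ (ℝ × ℝ) (ℝ × ℝ)
    (Set.range_nonempty _)]
  rw [eq_top_iff]
  rintro z -
  have hrep : z = ((z.1 * (w i1).2 - z.2 * (w i1).1) / crossP (w i0) (w i1)) • w i0 +
      (((w i0).1 * z.2 - (w i0).2 * z.1) / crossP (w i0) (w i1)) • w i1 := by
    have hD : crossP (w i0) (w i1) ≠ 0 := hD
    unfold crossP at hD ⊢
    apply Prod.ext
    · simp only [Prod.fst_add, Prod.smul_fst, smul_eq_mul]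
      rw [div_mul_eq_mul_div, div_mul_eq_mul_div, ← add_div, eq_div_iff hD]
      ring
    · simp only [Prod.snd_add, Prod.smul_snd, smul_eq_mul]
      rw [div_mul_eq_mul_div, div_mul_eq_mul_div, ← add_div, eq_div_iff hD]
      ring
  rw [hrep]
  exact Submodule.add_mem _ (Submodule.smul_mem _ _ (hvs i0))
    (Submodule.smul_mem _ _ (hvs i1))
end dir1
/-- For an integral sorted edge family `w_i = n_i • v_i` (with `n_i` a positive integer
and `v_i ∈ ℤ²` with coprime coordinates, `k ≥ 3`), the integer points on the frontier of
the polygon of the family are exactly the points `s_{j-1} + m • v_j` with `1 ≤ j ≤ k`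
and `0 ≤ m ≤ n_j`. -/
theorem frontier_integer_points {k : ℕ} (hk : 3 ≤ k)
    (n : Fin k → ℕ) (v : Fin k → ℤ × ℤ)
    (hn : ∀ i, 0 < n i) (hv : ∀ i, Int.gcd (v i).1 (v i).2 = 1)
    (w : Fin k → ℝ × ℝ)
    (hw : ∀ i, w i = (n i : ℝ) • (((v i).1 : ℝ), ((v i).2 : ℝ)))
    (hsef : IsSortedEdgeFamily w) :
    {x : ℝ × ℝ | x ∈ frontier (convexHull ℝ (Set.range (partialSum w))) ∧
        ∃ a b : ℤ, x = ((a : ℝ), (b : ℝ))} =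
    {x : ℝ × ℝ | ∃ j : Fin k, ∃ m : ℕ, m ≤ n j ∧
        x = (∑ i ∈ Finset.Iio j, w i) + (m : ℝ) • (((v j).1 : ℝ), ((v j).2 : ℝ))} := by
  obtain ⟨hw0, hsum, hmono⟩ := hsef
  haveI : NeZero k := ⟨by omega⟩
  ext x
  simp only [Set.mem_setOf_eq]
  constructor
  · rintro ⟨hxf, hxlat⟩
    set P := convexHull ℝ (Set.range (partialSum w)) with hP
    have hclosed : IsClosed P :=
      ((Set.finite_range (partialSum w)).isCompact_convexHull ℝ).isClosed
    rw [hclosed.frontier_eq] at hxf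
    obtain ⟨hxP, hxni⟩ := hxf
    obtain ⟨y0, hy0⟩ := interior_nonempty hk hmono hw0 hsum
    obtain ⟨f, hf⟩ := geometric_hahn_banach_open_point
      ((convex_convexHull ℝ _).interior) isOpen_interior hxni
    -- f ≤ f x on all of P
    have hfP : ∀ y ∈ P, f y ≤ f x := by
      intro y hy
      have hseqlt : ∀ ε : ℝ, 0 < ε → ε ≤ 1 → ε * f y0 + (1 - ε) * f y < f x := by
        intro ε hε hε1
        have hz : ε • y0 + (1 - ε) • y ∈ interior P :=
          (convex_convexHull ℝ _).combo_interior_closure_mem_interior hy0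
            (subset_closure hy) hε (by linarith) (by ring)
        have := hf _ hz
        rwa [map_add, map_smul, map_smul, smul_eq_mul, smul_eq_mul] at this
      by_contra hcon
      push_neg at hcon
      have hy0x : f y0 < f x := hf y0 hy0
      have hpos : 0 < f y - f y0 := by linarith
      set ε := min 1 ((f y - f x) / (2 * (f y - f y0))) with hε
      have hεpos : 0 < ε := lt_min one_pos (div_pos (by linarith) (by linarith))
      have hε1 : ε ≤ 1 := min_le_left _ _
      have hkey := hseqlt ε hεpos hε1
      have h2 : ε ≤ (f y - f x) / (2 * (f y - f y0)) := min_le_right _ _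
      have h3 : ε * (f y - f y0) ≤ (f y - f x) / 2 := by
        have := mul_le_mul_of_nonneg_right h2 (le_of_lt hpos)
        have heq : (f y - f x) / (2 * (f y - f y0)) * (f y - f y0) = (f y - f x) / 2 := by
          field_simp
        linarith [heq ▸ this]
      nlinarith
    -- argmax
    obtain ⟨a, _, ha⟩ := Finset.exists_max_image Finset.univ
      (fun i => f (partialSum w i)) ⟨⟨0, by omega⟩, Finset.mem_univ _⟩
    have hmaxf : ∀ i, f (partialSum w i) ≤ f (partialSum w a) :=
      fun i => ha i (Finset.mem_univ i)
    have hfxM : f x = f (partialSum w a) := by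
      apply le_antisymm
      · have hsub : P ⊆ {y | f y ≤ f (partialSum w a)} := by
          apply convexHull_min
          · rintro _ ⟨i, rfl⟩; exact hmaxf i
          · exact convex_halfSpace_le ⟨f.map_add, f.map_smul⟩ _
        exact hsub hxP
      · exact hfP _ (subset_convexHull ℝ _ (Set.mem_range_self a))
    -- u representation
    set u : ℝ × ℝ := (f (0, 1), -f (1, 0)) with hu
    have hfu : ∀ y : ℝ × ℝ, f y = crossP u y := by
      intro y
      have hy : y = y.1 • ((1:ℝ), (0:ℝ)) + y.2 • ((0:ℝ), (1:ℝ)) := by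
        apply Prod.ext <;> simp
      calc f y = f (y.1 • ((1:ℝ), (0:ℝ)) + y.2 • ((0:ℝ), (1:ℝ))) := by rw [← hy]
        _ = y.1 * f ((1:ℝ), (0:ℝ)) + y.2 * f ((0:ℝ), (1:ℝ)) := by
            rw [map_add, map_smul, map_smul, smul_eq_mul, smul_eq_mul]
        _ = crossP u y := by unfold crossP; rw [hu]; ring
    have hune : u ≠ 0 := by
      intro h0
      have hlt : f y0 < f x := hf y0 hy0
      rw [hfu y0, hfu x, h0] at hlt
      unfold crossP at hlt
      simp at hlt
    obtain ⟨j, hface⟩ := face_in_edge hk hmono hw0 hsum u hune a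
      (fun i => by rw [← hfu, ← hfu]; exact hmaxf i)
    -- convex combination
    have hfin : (Set.range (partialSum w)).Finite := Set.finite_range _
    have hxP2 := hxP
    rw [hP, hfin.convexHull_eq] at hxP2
    obtain ⟨W, hW0, hW1, hWc⟩ := hxP2
    have hyle : ∀ y ∈ hfin.toFinset, f y ≤ f (partialSum w a) := by
      intro y hy
      rw [Set.Finite.mem_toFinset] at hy
      obtain ⟨i, rfl⟩ := hy
      exact hmaxf i
    have hxsum : x = ∑ y ∈ hfin.toFinset, W y • y := by
      rw [← hWc, Finset.centerMass_eq_of_sum_1 _ id hW1]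
      simp
    have hfx2 : ∑ y ∈ hfin.toFinset, W y * f y = f (partialSum w a) := by
      rw [← hfxM, hxsum, map_sum]
      apply Finset.sum_congr rfl
      intro y _
      rw [map_smul, smul_eq_mul]
    have hzero : ∀ y ∈ hfin.toFinset, W y * (f (partialSum w a) - f y) = 0 := by
      have hsum0 : ∑ y ∈ hfin.toFinset, W y * (f (partialSum w a) - f y) = 0 := by
        have he : ∑ y ∈ hfin.toFinset, W y * (f (partialSum w a) - f y) =
            (∑ y ∈ hfin.toFinset, W y) * f (partialSum w a) -
            ∑ y ∈ hfin.toFinset, W y * f y := by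
          rw [Finset.sum_mul, ← Finset.sum_sub_distrib]
          apply Finset.sum_congr rfl
          intro y _
          ring
        rw [he, hW1, hfx2, one_mul, sub_self]
      intro y hy
      have hnn : ∀ y ∈ hfin.toFinset, 0 ≤ W y * (f (partialSum w a) - f y) := by
        intro y hy
        apply mul_nonneg
        · exact hW0 y (by rwa [Set.Finite.mem_toFinset] at hy)
        · linarith [hyle y hy]
      exact (Finset.sum_eq_zero_iff_of_nonneg hnn).mp hsum0 y hy
    -- x lies in the edge segment
    have hseg : x ∈ segment ℝ (∑ t ∈ Finset.Iio j, w t)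
        ((∑ t ∈ Finset.Iio j, w t) + w j) := by
      have hxcm : x = (hfin.toFinset.filter (fun y => W y ≠ 0)).centerMass W id := by
        rw [← hWc]
        exact (Finset.centerMass_filter_ne_zero (w := W) (z := id)).symm
      rw [hxcm]
      have hmem : (hfin.toFinset.filter (fun y => W y ≠ 0)).centerMass W id ∈
          convexHull ℝ (segment ℝ (∑ t ∈ Finset.Iio j, w t)
            ((∑ t ∈ Finset.Iio j, w t) + w j)) := by
        apply Finset.centerMass_mem_convexHull
        · intro y hy
          rw [Finset.mem_filter] at hy
          exact hW0 y (by rw [← Set.Finite.mem_toFinset hfin]; exact hy.1)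
        · rw [Finset.sum_filter_ne_zero, hW1]
          norm_num
        · intro y hy
          rw [Finset.mem_filter] at hy
          obtain ⟨hyT, hyW⟩ := hy
          have hfy : f y = f (partialSum w a) := by
            have := hzero y hyT
            rcases mul_eq_zero.mp this with h | h
            · exact absurd h hyW
            · linarith
          rw [Set.Finite.mem_toFinset] at hyT
          obtain ⟨i, rfl⟩ := hyT
          exact hface i (by rw [← hfu, ← hfu]; exact hfy)
      rwa [(convex_segment _ _).convexHull_eq] at hmem
    obtain ⟨A, B, hAB⟩ := sum_lattice n v w hw (Finset.Iio j)
    obtain ⟨m, hm, hxm⟩ := lattice_on_segment (hn j) (hv j)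
      (by rw [← hw j]; exact hseg) ⟨A, B, hAB⟩ hxlat
    exact ⟨j, m, hm, hxm⟩
  · rintro ⟨j, m, hm, hxeq⟩
    constructor
    · apply edge_in_frontier hk hmono hw0 hsum j
      rw [hxeq, segment_eq_image']
      refine ⟨(m : ℝ) / (n j : ℝ), ?_, ?_⟩
      · rw [Set.mem_Icc]
        constructor
        · positivity
        · rw [div_le_one (by exact_mod_cast hn j)]
          exact_mod_cast hm
      · have hnj : (n j : ℝ) ≠ 0 := by
          have := hn j
          positivity
        show (∑ t ∈ Finset.Iio j, w t) + ((m : ℝ) / (n j : ℝ)) •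
            ((∑ t ∈ Finset.Iio j, w t) + w j - ∑ t ∈ Finset.Iio j, w t) = _
        rw [show (∑ t ∈ Finset.Iio j, w t) + w j - ∑ t ∈ Finset.Iio j, w t = w j by abel]
        rw [hw j, smul_smul, div_mul_cancel₀ _ hnj]
    · obtain ⟨A, B, hAB⟩ := sum_lattice n v w hw (Finset.Iio j)
      refine ⟨A + m * (v j).1, B + m * (v j).2, ?_⟩
      rw [hxeq, hAB]
      apply Prod.ext
      · simp only [Prod.fst_add, Prod.smul_fst, smul_eq_mul]
        push_cast
        ring
      · simp only [Prod.snd_add, Prod.smul_snd, smul_eq_mul]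
        push_cast
        ring
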